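/- The kinetic energy ratio γ = K⁺/K⁻ for the impact law q̇⁺ = q̇⁻ − (e+1)S q̇⁻ satisfies 0 ≤ γ ≤ 1 whenever e ∈ [0,1]; here γ = 1 − (1−e²)·((q̇⁻)ᵀ Sᵀ M S q̇⁻)/((q̇⁻)ᵀ M q̇⁻). -/

import Mathlib

open Matrix

theorem energy_ratio_bounds {n : ℕ}
    (M S : Matrix (Fin n) (Fin n) ℝ) (hM : M.PosDef)
    (hS : S * S = S) (hMS : M * S = Sᵀ * M) (hMS' : Sᵀ * M = Sᵀ * M * S)
    (e : ℝ) (he0 : 0 ≤ e) (he1 : e ≤ 1)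
    (qm : Fin n → ℝ) (hqm : qm ≠ 0)
    (γ : ℝ)
    (hγ : γ = 1 - (1 - e ^ 2) * (qm ⬝ᵥ ((Sᵀ * M * S) *ᵥ qm)) / (qm ⬝ᵥ (M *ᵥ qm))) :
    0 ≤ γ ∧ γ ≤ 1 := by
  set a := qm ⬝ᵥ ((Sᵀ * M * S) *ᵥ qm) with ha_def
  set b := qm ⬝ᵥ (M *ᵥ qm) with hb_def
  have hb : 0 < b := by simpa [hb_def] using hM.dotProduct_mulVec_pos hqm
  have ha : 0 ≤ a := by
    have := (hM.posSemidef.conjTranspose_mul_mul_same S).dotProduct_mulVec_nonneg qm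
    simpa [ha_def, conjTranspose_eq_transpose_of_trivial] using this
  -- cross terms
  have h1 : qm ⬝ᵥ (M *ᵥ (S *ᵥ qm)) = a := by
    rw [mulVec_mulVec, hMS, hMS', ha_def]
  have tr : ∀ (A : Matrix (Fin n) (Fin n) ℝ) (x y : Fin n → ℝ),
      (A *ᵥ x) ⬝ᵥ y = x ⬝ᵥ (Aᵀ *ᵥ y) := by
    intro A x y
    rw [Matrix.dotProduct_mulVec, Matrix.vecMul_transpose]
  have h2 : (S *ᵥ qm) ⬝ᵥ (M *ᵥ qm) = a := by
    rw [tr, mulVec_mulVec, hMS', ha_def]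
  have h3 : (S *ᵥ qm) ⬝ᵥ (M *ᵥ (S *ᵥ qm)) = a := by
    rw [tr, mulVec_mulVec, mulVec_mulVec, ha_def]
  have key : 0 ≤ (qm - S *ᵥ qm) ⬝ᵥ (M *ᵥ (qm - S *ᵥ qm)) := by
    simpa using hM.posSemidef.dotProduct_mulVec_nonneg (qm - S *ᵥ qm)
  have hab : a ≤ b := by
    have hx : (qm - S *ᵥ qm) ⬝ᵥ (M *ᵥ (qm - S *ᵥ qm)) = b - a := by
      rw [mulVec_sub, dotProduct_sub, sub_dotProduct, sub_dotProduct, h1, h2, h3, hb_def]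
      ring
    rw [hx] at key
    linarith
  have ht0 : 0 ≤ 1 - e ^ 2 := by nlinarith
  have ht1 : 1 - e ^ 2 ≤ 1 := by nlinarith
  constructor
  · rw [hγ, sub_nonneg, div_le_one hb]
    nlinarith
  · rw [hγ]
    have : 0 ≤ (1 - e ^ 2) * a / b := div_nonneg (mul_nonneg ht0 ha) hb.le
    linarith
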